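/- Let ε > 0 and let u : (0,∞) → ℝ be upper semicontinuous with the following property: for every y₀ ∈ (0,∞) and every continuously differentiable function ψ : (0,∞) → ℝ such that u − ψ has a local maximum at y₀, one has ψ′(y₀) ≤ −ε. Then u is nonincreasing on (0,∞). -/

import Mathlib

open Set Filter Topology

/-- An upper semicontinuous function on a nonempty compact set attains its maximum. -/
lemma usc_compact_exists_max {K : Set ℝ} (hK : IsCompact K) (hne : K.Nonempty)
    {f : ℝ → ℝ} (hf : UpperSemicontinuousOn f K) :
    ∃ x₀ ∈ K, ∀ x ∈ K, f x ≤ f x₀ := by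
  by_contra h
  push_neg at h
  choose g hgK hgf using h
  have hmem : ∀ x (hx : x ∈ K), {y | f y < f (g x hx)} ∈ 𝓝[K] x :=
    fun x hx => hf x hx (f (g x hx)) (hgf x hx)
  have hmem' : ∀ x (hx : x ∈ K), ∃ t : Set ℝ, t ∈ 𝓝 x ∧ t ∩ K ⊆ {y | f y < f (g x hx)} := by
    intro x hx
    rcases mem_nhdsWithin.mp (hmem x hx) with ⟨t, ht_open, hxt, hsub⟩
    exact ⟨t, ht_open.mem_nhds hxt, hsub⟩
  choose t ht_nhds ht_sub using hmem'
  obtain ⟨s, hs⟩ := hK.elim_nhds_subcover' t ht_nhds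
  obtain ⟨x₁, hx₁⟩ := hne
  have hs_ne : s.Nonempty := by
    rcases Set.mem_iUnion₂.mp (hs hx₁) with ⟨x, hxs, _⟩
    exact ⟨x, hxs⟩
  obtain ⟨xm, hxms, hmax⟩ := s.exists_max_image (fun x => f (g x.1 x.2)) hs_ne
  set z := g xm.1 xm.2 with hz
  have hzK : z ∈ K := hgK _ _
  rcases Set.mem_iUnion₂.mp (hs hzK) with ⟨x, hxs, hzt⟩
  have h1 : f z < f (g x.1 x.2) := ht_sub x.1 x.2 ⟨hzt, hzK⟩
  have h2 : f (g x.1 x.2) ≤ f z := hmax x hxs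
  linarith

/-- derivative of the C¹ function `(max (x-b) 0)^2`. -/
lemma hasDerivAt_posPart_sq (b y : ℝ) :
    HasDerivAt (fun x : ℝ => (max (x - b) 0) ^ 2) (2 * max (y - b) 0) y := by
  rcases lt_trichotomy y b with h | h | h
  · have h0 : max (y - b) 0 = 0 := max_eq_right (by linarith)
    rw [h0, mul_zero]
    have heq : (fun x : ℝ => (max (x - b) 0) ^ 2) =ᶠ[𝓝 y] fun _ => (0 : ℝ) := by
      filter_upwards [Iio_mem_nhds h] with x hx
      have hx' : x - b ≤ 0 := by
        have := Set.mem_Iio.mp hx; linarith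
      simp [max_eq_right hx']
    exact (hasDerivAt_const y (0 : ℝ)).congr_of_eventuallyEq heq
  · subst h
    have h0 : max (y - y) 0 = 0 := by simp
    rw [h0, mul_zero]
    rw [hasDerivAt_iff_tendsto_slope]
    have hbound : ∀ᶠ x in 𝓝[≠] y,
        ‖slope (fun x : ℝ => (max (x - y) 0) ^ 2) y x‖ ≤ |x - y| := by
      filter_upwards [self_mem_nhdsWithin] with x hx
      have hxy : x ≠ y := hx
      have h2 : |x - y| ≠ 0 := by
        simp only [ne_eq, abs_eq_zero, sub_eq_zero]; exact hxy
      rw [slope_def_field]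
      have hfy : (max (y - y) 0 : ℝ) ^ 2 = 0 := by simp
      rw [hfy, sub_zero, div_eq_mul_inv, norm_mul, norm_inv, Real.norm_eq_abs,
        Real.norm_eq_abs, abs_pow]
      have h3 : |max (x - y) 0| ≤ |x - y| := by
        rcases le_or_gt (x - y) 0 with h' | h'
        · rw [max_eq_right h']; simp
        · rw [max_eq_left h'.le]
      calc |max (x - y) 0| ^ 2 * |x - y|⁻¹
          ≤ |x - y| ^ 2 * |x - y|⁻¹ := by gcongr
        _ = |x - y| := by field_simp [h2]
    have htend : Tendsto (fun x : ℝ => |x - y|) (𝓝[≠] y) (𝓝 0) := by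
      have h1 : Tendsto (fun x : ℝ => x - y) (𝓝 y) (𝓝 (y - y)) :=
        (continuous_id.sub continuous_const).tendsto y
      have h2 : Tendsto (fun x : ℝ => |x - y|) (𝓝 y) (𝓝 0) := by simpa using h1.abs
      exact h2.mono_left nhdsWithin_le_nhds
    exact squeeze_zero_norm' hbound htend
  · have heq : (fun x : ℝ => (max (x - b) 0) ^ 2) =ᶠ[𝓝 y] fun x => (x - b) ^ 2 := by
      filter_upwards [Ioi_mem_nhds h] with x hx
      have hx' : (0:ℝ) ≤ x - b := by
        have := Set.mem_Ioi.mp hx; linarith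
      simp [max_eq_left hx']
    have hd : HasDerivAt (fun x : ℝ => (x - b) ^ 2) (2 * (y - b)) y := by
      have := ((hasDerivAt_id y).sub_const b).fun_pow 2
      simpa using this
    have h0 : max (y - b) 0 = y - b := max_eq_left (by linarith)
    rw [h0]
    exact hd.congr_of_eventuallyEq heq

/- STATEMENT 9:
Let ε > 0 and let u : (0,∞) → ℝ be upper semicontinuous with the following
property: for every y₀ ∈ (0,∞) and every continuously differentiable function
ψ : (0,∞) → ℝ such that u − ψ has a local maximum at y₀, one has
ψ′(y₀) ≤ −ε. Then u is nonincreasing on (0,∞). -/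
theorem stmt_9 (ε : ℝ) (hε : 0 < ε) (u : ℝ → ℝ)
    (husc : UpperSemicontinuousOn u (Set.Ioi 0))
    (hvisc : ∀ y₀ ∈ Set.Ioi (0 : ℝ), ∀ ψ ψ' : ℝ → ℝ,
      (∀ y ∈ Set.Ioi (0 : ℝ), HasDerivAt ψ (ψ' y) y) →
      ContinuousOn ψ' (Set.Ioi 0) →
      IsLocalMaxOn (fun y => u y - ψ y) (Set.Ioi 0) y₀ →
      ψ' y₀ ≤ -ε) :
    AntitoneOn u (Set.Ioi 0) := by
  intro a ha b hb hab
  by_contra hcon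
  push_neg at hcon
  have ha0 : (0:ℝ) < a := ha
  have hab' : a < b := by
    rcases lt_or_eq_of_le hab with h | h
    · exact h
    · subst h; exact absurd hcon (lt_irrefl _)
  set m := u b - u a with hm
  have hm0 : 0 < m := sub_pos.mpr hcon
  set k := m / (2 * (b - a)) with hk
  have hk0 : 0 < k := div_pos hm0 (by linarith)
  set c := b + 1 with hc
  set A := max 0 (u c - u b - k) + 1 with hA
  have hA1 : (1:ℝ) ≤ A := le_add_of_nonneg_left (le_max_left _ _)
  have hAgt : u c - u b - k < A := lt_of_le_of_lt (le_max_right 0 _) (by linarith)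
  set ψ := fun x : ℝ => k * (x - a) + A * (max (x - b) 0) ^ 2 with hψ
  set ψ' := fun x : ℝ => k + A * (2 * max (x - b) 0) with hψ'
  have hderiv : ∀ y : ℝ, HasDerivAt ψ (ψ' y) y := by
    intro y
    have h1 : HasDerivAt (fun x : ℝ => k * (x - a)) k y := by
      simpa using ((hasDerivAt_id y).sub_const a).const_mul k
    exact h1.add ((hasDerivAt_posPart_sq b y).const_mul A)
  have hψ'cont : Continuous ψ' := by
    apply continuous_const.add
    exact continuous_const.mul (continuous_const.mul
      ((continuous_id.sub continuous_const).max continuous_const))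
  have hψcont : Continuous ψ := by
    apply (continuous_const.mul (continuous_id.sub continuous_const)).add
    exact continuous_const.mul
      (((continuous_id.sub continuous_const).max continuous_const).pow 2)
  have hsub : Set.Icc a c ⊆ Set.Ioi 0 := fun x hx => lt_of_lt_of_le ha0 hx.1
  have huscf : UpperSemicontinuousOn (fun y => u y - ψ y) (Set.Icc a c) := by
    have h1 : UpperSemicontinuousOn u (Set.Icc a c) := husc.mono hsub
    have h2 : UpperSemicontinuousOn (fun y => -ψ y) (Set.Icc a c) :=
      (hψcont.neg.continuousOn).upperSemicontinuousOn
    simpa [sub_eq_add_neg] using h1.add h2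
  have hc_mem : a ≤ c := by rw [hc]; linarith
  obtain ⟨y₀, hy₀mem, hy₀max⟩ := usc_compact_exists_max isCompact_Icc
    ⟨a, Set.left_mem_Icc.mpr hc_mem⟩ huscf
  -- key values of ψ
  have hqa : max (a - b) 0 = 0 := max_eq_right (by linarith)
  have hqb : max (b - b) 0 = 0 := by simp
  have hqc : max (c - b) 0 = 1 := by
    rw [hc, show b + 1 - b = (1:ℝ) by ring]; simp
  have hψa : ψ a = 0 := by rw [hψ]; simp [hqa]
  have hψb : ψ b = k * (b - a) := by rw [hψ]; simp [hqb]
  have hψcv : ψ c = k * (c - a) + A := by rw [hψ]; simp [hqc]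
  have hkba : k * (b - a) = m / 2 := by
    have hba : b - a ≠ 0 := sub_ne_zero.mpr hab'.ne'
    rw [hk]
    field_simp
  have hfb_fa : (u a - ψ a) < (u b - ψ b) := by
    rw [hψa, hψb, hkba]; rw [hm] at hm0 ⊢; linarith
  have hfc_fb : (u c - ψ c) < (u b - ψ b) := by
    rw [hψb, hψcv]
    have h1 : k * (c - a) = k * (b - a) + k := by rw [hc]; ring
    linarith
  have hfb_le : (u b - ψ b) ≤ (u y₀ - ψ y₀) :=
    hy₀max b ⟨hab'.le, by rw [hc]; linarith⟩
  have hy₀a : a < y₀ := by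
    rcases lt_or_eq_of_le hy₀mem.1 with h | h
    · exact h
    · exfalso; rw [← h] at hfb_le; linarith
  have hy₀c : y₀ < c := by
    rcases lt_or_eq_of_le hy₀mem.2 with h | h
    · exact h
    · exfalso; rw [h] at hfb_le; linarith
  have hlocmax : IsLocalMaxOn (fun y => u y - ψ y) (Set.Ioi 0) y₀ := by
    have hIoo : Set.Ioo a c ∈ 𝓝[Set.Ioi 0] y₀ :=
      nhdsWithin_le_nhds (isOpen_Ioo.mem_nhds ⟨hy₀a, hy₀c⟩)
    filter_upwards [hIoo] with y hy
    exact hy₀max y (Set.Ioo_subset_Icc_self hy)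
  have hkey := hvisc y₀ (hsub hy₀mem) ψ ψ' (fun y _ => hderiv y)
    hψ'cont.continuousOn hlocmax
  have hnn : 0 ≤ A * (2 * max (y₀ - b) 0) := by positivity
  have heval : ψ' y₀ = k + A * (2 * max (y₀ - b) 0) := rfl
  rw [heval] at hkey
  linarith
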